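/- Let M = [[P, Q], [R, S]] be a 2n×2n real symplectic matrix written in n×n blocks. Then the n×n matrix (1/2)(P∘P + Q∘Q + R∘R + S∘S), where ∘ denotes the Hadamard (entrywise) product, is doubly superstochastic; that is, there exists a doubly stochastic matrix E with (1/2)(P∘P + Q∘Q + R∘R + S∘S)_{ij} ≥ E_{ij} for all i, j. -/

import Mathlib

open Matrix BigOperators

/-- The standard symplectic form matrix `J = [[0, I], [-I, 0]]`. -/
def Jm (ι : Type*) [Fintype ι] [DecidableEq ι] : Matrix (ι ⊕ ι) (ι ⊕ ι) ℝ :=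
  Matrix.fromBlocks 0 1 (-1) 0

/-- A real `2n × 2n` matrix is symplectic if `Mᵀ J M = J`. -/
def IsSymplectic {ι : Type*} [Fintype ι] [DecidableEq ι]
    (M : Matrix (ι ⊕ ι) (ι ⊕ ι) ℝ) : Prop :=
  Mᵀ * Jm ι * M = Jm ι

/-- A subspace `W` of `ℝ^{2n}` is symplectic if every nonzero `u ∈ W` pairs
nontrivially via `J` with some `v ∈ W`. -/
def IsSymplecticSubspace {ι : Type*} [Fintype ι] [DecidableEq ι]
    (W : Submodule ℝ ((ι ⊕ ι) → ℝ)) : Prop :=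
  ∀ u ∈ W, u ≠ 0 → ∃ v ∈ W, u ⬝ᵥ (Jm ι).mulVec v ≠ 0

/-- `A` has symplectic kernel. -/
def HasSymplecticKernel {ι : Type*} [Fintype ι] [DecidableEq ι]
    (A : Matrix (ι ⊕ ι) (ι ⊕ ι) ℝ) : Prop :=
  IsSymplecticSubspace (LinearMap.ker A.mulVecLin)

/-- `d` is a vector of symplectic eigenvalues of `A` (Williamson diagonalization). -/
def IsSympSpectrum {ι : Type*} [Fintype ι] [DecidableEq ι]
    (A : Matrix (ι ⊕ ι) (ι ⊕ ι) ℝ) (d : ι → ℝ) : Prop :=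
  ∃ M : Matrix (ι ⊕ ι) (ι ⊕ ι) ℝ, IsSymplectic M ∧
    Mᵀ * A * M = Matrix.fromBlocks (Matrix.diagonal d) 0 0 (Matrix.diagonal d)

/-- Doubly stochastic matrix. -/
def DoublyStochastic {n : ℕ} (E : Matrix (Fin n) (Fin n) ℝ) : Prop :=
  (∀ i j, 0 ≤ E i j) ∧ (∀ i, ∑ j, E i j = 1) ∧ (∀ j, ∑ i, E i j = 1)

/-- Doubly superstochastic matrix: entrywise dominates a doubly stochastic matrix. -/
def DoublySuperstochastic {n : ℕ} (S : Matrix (Fin n) (Fin n) ℝ) : Prop :=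
  ∃ E, DoublyStochastic E ∧ ∀ i j, E i j ≤ S i j

/-- `X` lies in the convex hull of the symplectic orbit of `B`. -/
def InSympHull {ι : Type*} [Fintype ι] [DecidableEq ι]
    (B X : Matrix (ι ⊕ ι) (ι ⊕ ι) ℝ) : Prop :=
  ∃ (m : ℕ) (p : Fin m → ℝ) (M : Fin m → Matrix (ι ⊕ ι) (ι ⊕ ι) ℝ),
    (∀ i, 0 ≤ p i) ∧ (∑ i, p i = 1) ∧ (∀ i, IsSymplectic (M i)) ∧
    X = ∑ i, p i • ((M i)ᵀ * B * M i)

/-- Sum of the `k` smallest entries of `x`. -/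
noncomputable def psum {n : ℕ} (x : Fin n → ℝ) (k : ℕ) : ℝ :=
  ∑ j ∈ Finset.univ.filter (fun j : Fin n => (j : ℕ) < k), x (Tuple.sort x j)

namespace SuperAux

variable {n : ℕ}

def rsum (F : Fin n → Fin n → ℝ) (i : Fin n) : ℝ := ∑ j, F i j
def csum (F : Fin n → Fin n → ℝ) (j : Fin n) : ℝ := ∑ i, F i j
def tot (F : Fin n → Fin n → ℝ) : ℝ := ∑ i, ∑ j, F i j

lemma tot_eq_sum_rsum (F : Fin n → Fin n → ℝ) : tot F = ∑ i, rsum F i := rfl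

lemma tot_eq_sum_csum (F : Fin n → Fin n → ℝ) : tot F = ∑ j, csum F j := by
  rw [tot, Finset.sum_comm]; rfl

/-- feasibility for the flow problem -/
def Feas (T F : Fin n → Fin n → ℝ) : Prop :=
  (∀ a b, 0 ≤ F a b ∧ F a b ≤ T a b) ∧ (∀ i, rsum F i ≤ 1) ∧ (∀ j, csum F j ≤ 1)

/-- bump a single entry -/
def bump (F : Fin n → Fin n → ℝ) (i j : Fin n) (c : ℝ) : Fin n → Fin n → ℝ :=
  fun a b => F a b + (if a = i ∧ b = j then c else 0)

lemma bump_apply (F : Fin n → Fin n → ℝ) (i j : Fin n) (c : ℝ) (a b : Fin n) :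
    bump F i j c a b = F a b + (if a = i ∧ b = j then c else 0) := rfl

lemma rsum_bump (F : Fin n → Fin n → ℝ) (i j : Fin n) (c : ℝ) (a : Fin n) :
    rsum (bump F i j c) a = rsum F a + (if a = i then c else 0) := by
  unfold rsum bump
  rw [Finset.sum_add_distrib]
  congr 1
  by_cases h : a = i <;> simp [h]

lemma csum_bump (F : Fin n → Fin n → ℝ) (i j : Fin n) (c : ℝ) (b : Fin n) :
    csum (bump F i j c) b = csum F b + (if b = j then c else 0) := by
  unfold csum bump
  rw [Finset.sum_add_distrib]
  congr 1
  by_cases h : b = j <;> simp [h, and_comm]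

lemma tot_bump (F : Fin n → Fin n → ℝ) (i j : Fin n) (c : ℝ) :
    tot (bump F i j c) = tot F + c := by
  rw [tot_eq_sum_rsum, tot_eq_sum_rsum]
  simp only [rsum_bump]
  rw [Finset.sum_add_distrib]
  simp

/-- reachability by augmenting paths -/
inductive Reach (T F : Fin n → Fin n → ℝ) : Fin n ⊕ Fin n → Prop
  | base (i : Fin n) : rsum F i < 1 → Reach T F (Sum.inl i)
  | toCol {i : Fin n} (j : Fin n) : Reach T F (Sum.inl i) → F i j < T i j →
      Reach T F (Sum.inr j)
  | toRow {j : Fin n} (i : Fin n) : Reach T F (Sum.inr j) → 0 < F i j →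
      Reach T F (Sum.inl i)

/-- the augmentation invariant -/
def Inv (T F : Fin n → Fin n → ℝ) : Fin n ⊕ Fin n → Prop
  | Sum.inl i => ∃ δ > (0:ℝ), ∃ C > (0:ℝ), ∀ ε : ℝ, 0 < ε → ε < δ → ∃ F',
      (∀ a b, 0 ≤ F' a b ∧ F' a b ≤ T a b) ∧ (∀ i', rsum F' i' ≤ 1) ∧
      rsum F' i + ε ≤ 1 ∧ (∀ j', csum F' j' = csum F j') ∧ tot F' = tot F ∧
      (∀ a b, |F' a b - F a b| ≤ C * ε)
  | Sum.inr j => ∃ δ > (0:ℝ), ∃ C > (0:ℝ), ∀ ε : ℝ, 0 < ε → ε < δ → ∃ F',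
      (∀ a b, 0 ≤ F' a b ∧ F' a b ≤ T a b) ∧ (∀ i', rsum F' i' ≤ 1) ∧
      (∀ j', j' ≠ j → csum F' j' = csum F j') ∧ csum F' j = csum F j + ε ∧
      tot F' = tot F + ε ∧ (∀ a b, |F' a b - F a b| ≤ C * ε)

lemma reach_inv {T F : Fin n → Fin n → ℝ} (hF : Feas T F) {x : Fin n ⊕ Fin n}
    (h : Reach T F x) : Inv T F x := by
  induction h with
  | base i hi =>
      refine ⟨1 - rsum F i, by linarith, 1, one_pos, fun ε hε hεδ => ?_⟩
      exact ⟨F, hF.1, hF.2.1, by linarith, fun _ => rfl, rfl, fun a b => by simp [hε.le]⟩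
  | @toCol i j hr hij ih =>
      obtain ⟨δ, hδ, C, hC, hinv⟩ := ih
      refine ⟨min δ ((T i j - F i j) / (C + 1)),
        lt_min hδ (div_pos (by linarith) (by linarith)), C + 1, by linarith,
        fun ε hε hεδ => ?_⟩
      have hεδ' : ε < δ := lt_of_lt_of_le hεδ (min_le_left _ _)
      have hεg : ε * (C + 1) < T i j - F i j := by
        have h' := lt_of_lt_of_le hεδ (min_le_right _ _)
        calc ε * (C + 1) < (T i j - F i j) / (C + 1) * (C + 1) := by
              apply mul_lt_mul_of_pos_right h'; linarith
          _ = T i j - F i j := by field_simp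
      obtain ⟨F', h1, h2, h3, h4, h5, h6⟩ := hinv ε hε hεδ'
      refine ⟨bump F' i j ε, ?_, ?_, ?_, ?_, ?_, ?_⟩
      · intro a b
        rw [bump_apply]
        by_cases hab : a = i ∧ b = j
        · obtain ⟨rfl, rfl⟩ := hab
          rw [if_pos ⟨rfl, rfl⟩]
          have h6' := abs_le.mp (h6 a b)
          constructor
          · have := (h1 a b).1; linarith
          · nlinarith [h6'.2]
        · rw [if_neg hab, add_zero]
          exact h1 a b
      · intro i'
        rw [rsum_bump]
        by_cases hi' : i' = i
        · subst hi'; rw [if_pos rfl]; linarith [h3]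
        · rw [if_neg hi', add_zero]; exact h2 i'
      · intro j' hj'
        rw [csum_bump, if_neg hj', add_zero, h4 j']
      · rw [csum_bump, if_pos rfl, h4 j]
      · rw [tot_bump, h5]
      · intro a b
        rw [bump_apply]
        by_cases hab : a = i ∧ b = j
        · obtain ⟨rfl, rfl⟩ := hab
          rw [if_pos ⟨rfl, rfl⟩]
          have := abs_le.mp (h6 a b)
          rw [abs_le]
          constructor <;> nlinarith [this.1, this.2]
        · rw [if_neg hab, add_zero]
          calc |F' a b - F a b| ≤ C * ε := h6 a b
            _ ≤ (C + 1) * ε := by nlinarith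
  | @toRow j i hr hij ih =>
      obtain ⟨δ, hδ, C, hC, hinv⟩ := ih
      refine ⟨min δ (F i j / (C + 1)),
        lt_min hδ (div_pos hij (by linarith)), C + 1, by linarith,
        fun ε hε hεδ => ?_⟩
      have hεδ' : ε < δ := lt_of_lt_of_le hεδ (min_le_left _ _)
      have hεg : ε * (C + 1) < F i j := by
        have h' := lt_of_lt_of_le hεδ (min_le_right _ _)
        calc ε * (C + 1) < F i j / (C + 1) * (C + 1) := by
              apply mul_lt_mul_of_pos_right h'; linarith
          _ = F i j := by field_simp
      obtain ⟨F', h1, h2, h3, h4, h5, h6⟩ := hinv ε hε hεδ'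
      refine ⟨bump F' i j (-ε), ?_, ?_, ?_, ?_, ?_, ?_⟩
      · intro a b
        rw [bump_apply]
        by_cases hab : a = i ∧ b = j
        · obtain ⟨rfl, rfl⟩ := hab
          rw [if_pos ⟨rfl, rfl⟩]
          have h6' := abs_le.mp (h6 a b)
          constructor
          · nlinarith [h6'.1]
          · have := (h1 a b).2; linarith
        · rw [if_neg hab, add_zero]
          exact h1 a b
      · intro i'
        rw [rsum_bump]
        by_cases hi' : i' = i
        · subst hi'; rw [if_pos rfl]; linarith [h2 i']
        · rw [if_neg hi', add_zero]; exact h2 i'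
      · rw [rsum_bump, if_pos rfl]; linarith [h2 i]
      · intro j'
        rw [csum_bump]
        by_cases hj' : j' = j
        · subst hj'; rw [if_pos rfl, h4]; ring
        · rw [if_neg hj', add_zero]; exact h3 j' hj'
      · rw [tot_bump, h5]; ring
      · intro a b
        rw [bump_apply]
        by_cases hab : a = i ∧ b = j
        · obtain ⟨rfl, rfl⟩ := hab
          rw [if_pos ⟨rfl, rfl⟩]
          have := abs_le.mp (h6 a b)
          rw [abs_le]
          constructor <;> nlinarith [this.1, this.2]
        · rw [if_neg hab, add_zero]
          calc |F' a b - F a b| ≤ C * ε := h6 a b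
            _ ≤ (C + 1) * ε := by nlinarith

lemma partB (T : Fin n → Fin n → ℝ) (hT : ∀ i j, 0 ≤ T i j)
    (hall : ∀ A B : Finset (Fin n),
      (A.card : ℝ) + B.card - n ≤ ∑ i ∈ A, ∑ j ∈ B, T i j) :
    ∃ E : Fin n → Fin n → ℝ, (∀ i j, 0 ≤ E i j) ∧ (∀ i, ∑ j, E i j = 1) ∧
      (∀ j, ∑ i, E i j = 1) ∧ (∀ i j, E i j ≤ T i j) := by
  classical
  -- the feasible set is compact and nonempty
  set K : Set (Fin n → Fin n → ℝ) := {F | Feas T F} with hK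
  have hcont : ∀ i j : Fin n, Continuous fun F : Fin n → Fin n → ℝ => F i j :=
    fun i j => (continuous_apply j).comp (continuous_apply i)
  have hrsumcont : ∀ i, Continuous fun F : Fin n → Fin n → ℝ => rsum F i := by
    intro i; exact continuous_finset_sum _ fun j _ => hcont i j
  have hcsumcont : ∀ j, Continuous fun F : Fin n → Fin n → ℝ => csum F j := by
    intro j; exact continuous_finset_sum _ fun i _ => hcont i j
  have htotcont : Continuous (tot (n := n)) :=
    continuous_finset_sum _ fun i _ => hrsumcont i
  have hKclosed : IsClosed K := by
    have h1 : IsClosed {F : Fin n → Fin n → ℝ | ∀ a b, 0 ≤ F a b ∧ F a b ≤ T a b} := by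
      have : {F : Fin n → Fin n → ℝ | ∀ a b, 0 ≤ F a b ∧ F a b ≤ T a b} =
          ⋂ a, ⋂ b, ({F | 0 ≤ F a b} ∩ {F | F a b ≤ T a b}) := by
        ext F; simp [Set.mem_iInter, forall_and]
      rw [this]
      exact isClosed_iInter fun a => isClosed_iInter fun b =>
        ((isClosed_le continuous_const (hcont a b)).inter
          (isClosed_le (hcont a b) continuous_const))
    have h2 : IsClosed {F : Fin n → Fin n → ℝ | ∀ i, rsum F i ≤ 1} := by
      have : {F : Fin n → Fin n → ℝ | ∀ i, rsum F i ≤ 1} =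
          ⋂ i, {F | rsum F i ≤ 1} := by ext F; simp [Set.mem_iInter]
      rw [this]
      exact isClosed_iInter fun i => isClosed_le (hrsumcont i) continuous_const
    have h3 : IsClosed {F : Fin n → Fin n → ℝ | ∀ j, csum F j ≤ 1} := by
      have : {F : Fin n → Fin n → ℝ | ∀ j, csum F j ≤ 1} =
          ⋂ j, {F | csum F j ≤ 1} := by ext F; simp [Set.mem_iInter]
      rw [this]
      exact isClosed_iInter fun j => isClosed_le (hcsumcont j) continuous_const
    have : K = {F : Fin n → Fin n → ℝ | ∀ a b, 0 ≤ F a b ∧ F a b ≤ T a b} ∩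
        ({F | ∀ i, rsum F i ≤ 1} ∩ {F | ∀ j, csum F j ≤ 1}) := by
      ext F; simp [hK, Feas, and_assoc]
    rw [this]
    exact h1.inter (h2.inter h3)
  have hKsub : K ⊆ Set.Icc 0 T := by
    intro F hF
    constructor
    · intro i; intro j; exact (hF.1 i j).1
    · intro i; intro j; exact (hF.1 i j).2
  have hKcompact : IsCompact K :=
    IsCompact.of_isClosed_subset isCompact_Icc hKclosed hKsub
  have h0K : (0 : Fin n → Fin n → ℝ) ∈ K := by
    refine ⟨fun a b => ⟨le_refl _, hT a b⟩, fun i => ?_, fun j => ?_⟩ <;>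
      simp [rsum, csum]
  obtain ⟨F, hFK, hFmax⟩ := hKcompact.exists_isMaxOn ⟨0, h0K⟩ htotcont.continuousOn
  have hFfeas : Feas T F := hFK
  -- reachable columns are saturated
  have hsatur : ∀ j : Fin n, Reach T F (Sum.inr j) → csum F j = 1 := by
    intro j hreach
    by_contra hne
    have hlt : csum F j < 1 := lt_of_le_of_ne (hFfeas.2.2 j) hne
    obtain ⟨δ, hδ, C, hC, hinv⟩ := reach_inv hFfeas hreach
    have hmin : 0 < min δ (1 - csum F j) := lt_min hδ (by linarith)
    have hminδ := min_le_left δ (1 - csum F j)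
    have hminc := min_le_right δ (1 - csum F j)
    obtain ⟨F', h1, h2, h3, h4, h5, _⟩ :=
      hinv (min δ (1 - csum F j) / 2) (by linarith) (by linarith)
    have hF'K : F' ∈ K := by
      refine ⟨h1, h2, fun j' => ?_⟩
      by_cases hj' : j' = j
      · subst hj'
        rw [h4]
        linarith
      · rw [h3 j' hj']; exact hFfeas.2.2 j'
    have hmax := hFmax hF'K
    simp only [Set.mem_setOf_eq] at hmax
    rw [h5] at hmax
    linarith
  -- the reachable sets
  set Rs : Finset (Fin n) := Finset.univ.filter (fun i => Reach T F (Sum.inl i)) with hRs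
  set Cs : Finset (Fin n) := Finset.univ.filter (fun j => Reach T F (Sum.inr j)) with hCs
  have hmemR : ∀ i, i ∈ Rs ↔ Reach T F (Sum.inl i) := by
    intro i; simp [hRs]
  have hmemC : ∀ j, j ∈ Cs ↔ Reach T F (Sum.inr j) := by
    intro j; simp [hCs]
  have hb : ∀ i ∈ Rs, ∀ j ∈ Csᶜ, F i j = T i j := by
    intro i hi j hj
    rcases (hFfeas.1 i j).2.lt_or_eq with hlt | heq
    · exfalso
      rw [Finset.mem_compl, hmemC] at hj
      exact hj (Reach.toCol j ((hmemR i).mp hi) hlt)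
    · exact heq
  have hc : ∀ j ∈ Cs, ∀ i ∈ Rsᶜ, F i j = 0 := by
    intro j hj i hi
    rcases (hFfeas.1 i j).1.lt_or_eq with hlt | heq
    · exfalso
      rw [Finset.mem_compl, hmemR] at hi
      exact hi (Reach.toRow i ((hmemC j).mp hj) hlt)
    · exact heq.symm
  have hd : ∀ i ∈ Rsᶜ, rsum F i = 1 := by
    intro i hi
    rcases (hFfeas.2.1 i).lt_or_eq with hlt | heq
    · exfalso
      rw [Finset.mem_compl, hmemR] at hi
      exact hi (Reach.base i hlt)
    · exact heq
  -- counting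
  have key : (n : ℝ) ≤ tot F := by
    have hhall := hall Rs Csᶜ
    have e1 : ∑ i ∈ Rs, ∑ j ∈ Csᶜ, T i j = ∑ i ∈ Rs, ∑ j ∈ Csᶜ, F i j := by
      apply Finset.sum_congr rfl; intro i hi
      apply Finset.sum_congr rfl; intro j hj
      exact (hb i hi j hj).symm
    have e2 : ∀ i, ∑ j ∈ Csᶜ, F i j = rsum F i - ∑ j ∈ Cs, F i j := by
      intro i
      have := Finset.sum_add_sum_compl Cs (fun j => F i j)
      unfold rsum
      linarith
    have e3 : ∑ i ∈ Rs, ∑ j ∈ Cs, F i j = (Cs.card : ℝ) := by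
      rw [Finset.sum_comm]
      have : ∀ j ∈ Cs, ∑ i ∈ Rs, F i j = 1 := by
        intro j hj
        have hsplit := Finset.sum_add_sum_compl Rs (fun i => F i j)
        have hzero : ∑ i ∈ Rsᶜ, F i j = 0 :=
          Finset.sum_eq_zero fun i hi => hc j hj i hi
        have : csum F j = 1 := hsatur j ((hmemC j).mp hj)
        unfold csum at this
        linarith
      rw [Finset.sum_congr rfl this]
      simp
    have e4 : ∑ i ∈ Rs, rsum F i = tot F - ((n : ℝ) - Rs.card) := by
      have hsplit := Finset.sum_add_sum_compl Rs (rsum F)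
      have hres : ∑ i ∈ Rsᶜ, rsum F i = (Rsᶜ.card : ℝ) := by
        rw [Finset.sum_congr rfl hd]; simp
      have hcard : (Rsᶜ.card : ℝ) = (n : ℝ) - Rs.card := by
        rw [Finset.card_compl]
        rw [Nat.cast_sub (Finset.card_le_univ Rs)]
        simp
      rw [tot_eq_sum_rsum]
      rw [hcard] at hres
      linarith
    have ecard : (Csᶜ.card : ℝ) = (n : ℝ) - Cs.card := by
      rw [Finset.card_compl]
      rw [Nat.cast_sub (Finset.card_le_univ Cs)]
      simp
    rw [e1] at hhall
    have : ∑ i ∈ Rs, ∑ j ∈ Csᶜ, F i j = ∑ i ∈ Rs, rsum F i - ∑ i ∈ Rs, ∑ j ∈ Cs, F i j := by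
      rw [← Finset.sum_sub_distrib]
      apply Finset.sum_congr rfl; intro i _
      exact e2 i
    rw [this, e3, e4, ecard] at hhall
    linarith
  have hle : tot F ≤ (n : ℝ) := by
    rw [tot_eq_sum_rsum]
    calc ∑ i, rsum F i ≤ ∑ _i : Fin n, (1:ℝ) := Finset.sum_le_sum fun i _ => hFfeas.2.1 i
      _ = n := by simp
  have htotn : tot F = (n : ℝ) := le_antisymm hle key
  -- conclude: all row and column sums are 1
  have hrone : ∀ i, rsum F i = 1 := by
    intro i
    by_contra hne
    have hlt : rsum F i < 1 := lt_of_le_of_ne (hFfeas.2.1 i) hne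
    have : tot F < (n : ℝ) := by
      rw [tot_eq_sum_rsum]
      calc ∑ i', rsum F i' < ∑ _i' : Fin n, (1:ℝ) := by
            apply Finset.sum_lt_sum (fun i' _ => hFfeas.2.1 i') ⟨i, Finset.mem_univ i, hlt⟩
        _ = n := by simp
    linarith
  have hcone : ∀ j, csum F j = 1 := by
    intro j
    by_contra hne
    have hlt : csum F j < 1 := lt_of_le_of_ne (hFfeas.2.2 j) hne
    have : tot F < (n : ℝ) := by
      rw [tot_eq_sum_csum]
      calc ∑ j', csum F j' < ∑ _j' : Fin n, (1:ℝ) := by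
            apply Finset.sum_lt_sum (fun j' _ => hFfeas.2.2 j') ⟨j, Finset.mem_univ j, hlt⟩
        _ = n := by simp
    linarith
  exact ⟨F, fun i j => (hFfeas.1 i j).1, hrone, hcone, fun i j => (hFfeas.1 i j).2⟩

end SuperAux


namespace SymplAux

variable {n : ℕ}

/-- doubled 0/1 indicator vector of a subset -/
def ind (s : Finset (Fin n)) : Fin n ⊕ Fin n → ℝ :=
  Sum.elim (fun i => if i ∈ s then 1 else 0) (fun i => if i ∈ s then 1 else 0)

lemma ind_zero_or_one (s : Finset (Fin n)) (a : Fin n ⊕ Fin n) :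
    ind s a = 0 ∨ ind s a = 1 := by
  rcases a with i | i <;> by_cases h : i ∈ s <;> simp [ind, h]

lemma J_mul_J : Jm (Fin n) * Jm (Fin n) = -1 := by
  simp only [Jm, Matrix.fromBlocks_multiply, Matrix.mul_zero, Matrix.zero_mul, Matrix.mul_one,
    Matrix.one_mul, Matrix.mul_neg, Matrix.neg_mul, zero_add, add_zero, neg_zero]
  ext a b
  rcases a with i | i <;> rcases b with j | j <;>
    simp [Matrix.fromBlocks_apply₁₁, Matrix.fromBlocks_apply₁₂, Matrix.fromBlocks_apply₂₁,
      Matrix.fromBlocks_apply₂₂, Matrix.one_apply, Matrix.neg_apply]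

lemma J_transpose : (Jm (Fin n))ᵀ = -Jm (Fin n) := by
  simp only [Jm, Matrix.fromBlocks_transpose, Matrix.transpose_zero, Matrix.transpose_one,
    Matrix.transpose_neg]
  ext a b
  rcases a with i | i <;> rcases b with j | j <;>
    simp [Matrix.fromBlocks_apply₁₁, Matrix.fromBlocks_apply₁₂, Matrix.fromBlocks_apply₂₁,
      Matrix.fromBlocks_apply₂₂, Matrix.one_apply, Matrix.neg_apply]

lemma Jt_mul_J : (Jm (Fin n))ᵀ * Jm (Fin n) = 1 := by
  rw [J_transpose, Matrix.neg_mul, J_mul_J, neg_neg]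

lemma diag_comm_J (s : Finset (Fin n)) :
    Matrix.diagonal (ind s) * Jm (Fin n) = Jm (Fin n) * Matrix.diagonal (ind s) := by
  ext a b
  rw [Matrix.diagonal_mul, Matrix.mul_diagonal]
  rcases a with i | i <;> rcases b with j | j <;>
      simp only [Jm, ind, Matrix.fromBlocks_apply₁₁, Matrix.fromBlocks_apply₁₂,
        Matrix.fromBlocks_apply₂₁, Matrix.fromBlocks_apply₂₂, Matrix.one_apply,
        Matrix.neg_apply, Matrix.zero_apply, Sum.elim_inl, Sum.elim_inr,
        mul_zero, zero_mul, mul_neg, neg_mul, neg_zero] <;>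
    by_cases hij : i = j <;> simp [hij]

lemma mulVec_dot (A : Matrix (Fin n ⊕ Fin n) (Fin n ⊕ Fin n) ℝ) (x y : Fin n ⊕ Fin n → ℝ) :
    (A.mulVec x) ⬝ᵥ y = x ⬝ᵥ (Aᵀ.mulVec y) := by
  rw [dotProduct_comm, Matrix.dotProduct_mulVec, dotProduct_comm,
    Matrix.mulVec_transpose]

lemma dot_self_eq (v : Fin n ⊕ Fin n → ℝ) : v ⬝ᵥ v = ∑ a, v a ^ 2 := by
  simp [dotProduct, sq]

lemma dot_self_nonneg (v : Fin n ⊕ Fin n → ℝ) : 0 ≤ v ⬝ᵥ v := by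
  rw [dot_self_eq]; positivity

lemma dot_J_self (w : Fin n ⊕ Fin n → ℝ) :
    ((Jm (Fin n)).mulVec w) ⬝ᵥ ((Jm (Fin n)).mulVec w) = w ⬝ᵥ w := by
  rw [mulVec_dot, Matrix.mulVec_mulVec, Jt_mul_J, Matrix.one_mulVec]

lemma dot_diag (d : Fin n ⊕ Fin n → ℝ) (u y : Fin n ⊕ Fin n → ℝ) :
    u ⬝ᵥ (Matrix.diagonal d).mulVec y = ((Matrix.diagonal d).mulVec u) ⬝ᵥ y := by
  simp only [dotProduct, Matrix.mulVec_diagonal]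
  exact Finset.sum_congr rfl fun a _ => by ring

/-- The key pointwise inequality. -/
lemma key_ineq (M : Matrix (Fin n ⊕ Fin n) (Fin n ⊕ Fin n) ℝ) (hM : IsSymplectic M)
    (A B : Finset (Fin n)) (x : Fin n ⊕ Fin n → ℝ)
    (hx1 : (Matrix.diagonal (ind B)).mulVec x = x)
    (hx2 : (Matrix.diagonal (ind A)).mulVec (M.mulVec x) = M.mulVec x) :
    2 * (x ⬝ᵥ x) ≤
      (((Matrix.diagonal (ind A)) * M * (Matrix.diagonal (ind B))).mulVec x) ⬝ᵥ
        (((Matrix.diagonal (ind A)) * M * (Matrix.diagonal (ind B))).mulVec x) +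
      (((Matrix.diagonal (ind A)) * M * (Matrix.diagonal (ind B))).mulVec
          ((Jm (Fin n)).mulVec x)) ⬝ᵥ
        (((Matrix.diagonal (ind A)) * M * (Matrix.diagonal (ind B))).mulVec
          ((Jm (Fin n)).mulVec x)) := by
  set DA := Matrix.diagonal (ind A) with hDA
  set DB := Matrix.diagonal (ind B) with hDB
  set J := Jm (Fin n) with hJ
  set G := DA * M * DB with hG
  set z := J.mulVec x with hz
  have hcommA : DA * J = J * DA := diag_comm_J A
  have hcommB : DB * J = J * DB := diag_comm_J B
  have hMJ : Mᵀ * J * M = J := hM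
  have hJJ : J * J = -1 := J_mul_J
  have hJtJ : Jᵀ * J = 1 := Jt_mul_J
  have hGx : G.mulVec x = M.mulVec x := by
    rw [hG, ← Matrix.mulVec_mulVec, hx1, ← Matrix.mulVec_mulVec, hx2]
  have hDBz : DB.mulVec z = z := by
    rw [hz, Matrix.mulVec_mulVec, hcommB, ← Matrix.mulVec_mulVec, hx1]
  have hGz : G.mulVec z = DA.mulVec (M.mulVec z) := by
    rw [hG, ← Matrix.mulVec_mulVec, hDBz, ← Matrix.mulVec_mulVec]
  set u := M.mulVec x with hu
  set w := DA.mulVec (M.mulVec z) with hw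
  have hc : u ⬝ᵥ (J.mulVec w) = -(x ⬝ᵥ x) := by
    have s1 : J.mulVec w = DA.mulVec (J.mulVec (M.mulVec z)) := by
      rw [hw, Matrix.mulVec_mulVec, ← hcommA, ← Matrix.mulVec_mulVec]
    rw [s1, dot_diag, hx2, hu, mulVec_dot, Matrix.mulVec_mulVec, Matrix.mulVec_mulVec,
      hMJ, hz, Matrix.mulVec_mulVec, hJJ, Matrix.neg_mulVec,
      Matrix.one_mulVec, dotProduct_neg]
  have hcs : (x ⬝ᵥ x) ^ 2 ≤ (u ⬝ᵥ u) * (w ⬝ᵥ w) := by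
    have h1 : (u ⬝ᵥ (J.mulVec w)) ^ 2 ≤ (u ⬝ᵥ u) * ((J.mulVec w) ⬝ᵥ (J.mulVec w)) := by
      have := Finset.sum_mul_sq_le_sq_mul_sq Finset.univ u (J.mulVec w)
      simpa [dotProduct, sq] using this
    rw [hc] at h1
    have h2 : (J.mulVec w) ⬝ᵥ (J.mulVec w) = w ⬝ᵥ w := dot_J_self w
    rw [h2] at h1
    simpa using h1
  have hqu := dot_self_nonneg u
  have hqw := dot_self_nonneg w
  have hqx := dot_self_nonneg x
  rw [hGx, hGz]
  nlinarith [sq_nonneg (u ⬝ᵥ u - w ⬝ᵥ w), sq_nonneg (u ⬝ᵥ u + w ⬝ᵥ w)]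


lemma rank_one_sub_diag (s : Finset (Fin n)) :
    ((1 : Matrix (Fin n ⊕ Fin n) (Fin n ⊕ Fin n) ℝ) - Matrix.diagonal (ind s)).rank
      = (n - s.card) + (n - s.card) := by
  classical
  rw [← Matrix.diagonal_one, Matrix.diagonal_sub, Matrix.rank_diagonal]
  rw [Fintype.card_subtype]
  have hset : Finset.univ.filter
        (fun a : Fin n ⊕ Fin n => (fun a => (1:ℝ) - ind s a) a ≠ 0) =
      Finset.univ.filter (fun a : Fin n ⊕ Fin n =>
        Sum.elim (fun i => i ∉ s) (fun i => i ∉ s) a) := by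
    apply Finset.filter_congr
    rintro (i | i) _ <;> by_cases h : i ∈ s <;> simp [ind, h]
  rw [hset, ← Finset.card_toLeft_add_card_toRight]
  have hL : (Finset.univ.filter (fun a : Fin n ⊕ Fin n =>
      Sum.elim (fun i => i ∉ s) (fun i => i ∉ s) a)).toLeft = sᶜ := by
    ext i; simp
  have hR : (Finset.univ.filter (fun a : Fin n ⊕ Fin n =>
      Sum.elim (fun i => i ∉ s) (fun i => i ∉ s) a)).toRight = sᶜ := by
    ext i; simp
  rw [hL, hR, Finset.card_compl, Fintype.card_fin]

lemma sum_ind (f : Fin n → ℝ) (s : Finset (Fin n)) :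
    ∑ j : Fin n, (if j ∈ s then f j else 0) = ∑ j ∈ s, f j := by
  rw [← Finset.sum_filter]
  congr 1
  ext j; simp

lemma frob_eq (M : Matrix (Fin n ⊕ Fin n) (Fin n ⊕ Fin n) ℝ) (A B : Finset (Fin n)) :
    ∑ a, ∑ b, (ind A a * M a b * ind B b)^2
      = ∑ i ∈ A, ∑ j ∈ B, ((M (Sum.inl i) (Sum.inl j)) ^ 2 + (M (Sum.inl i) (Sum.inr j)) ^ 2 +
        (M (Sum.inr i) (Sum.inl j)) ^ 2 + (M (Sum.inr i) (Sum.inr j)) ^ 2) := by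
  classical
  have hsq : ∀ a b, (ind A a * M a b * ind B b)^2 = ind A a * (M a b ^ 2 * ind B b) := by
    intro a b
    rcases ind_zero_or_one A a with h | h <;> rcases ind_zero_or_one B b with h' | h' <;>
      rw [h, h'] <;> ring
  have hinner : ∀ a : Fin n ⊕ Fin n, ∑ b, (M a b ^ 2 * ind B b)
      = ∑ j ∈ B, (M a (Sum.inl j) ^ 2 + M a (Sum.inr j) ^ 2) := by
    intro a
    rw [Fintype.sum_sum_type]
    have h1 : (∑ j : Fin n, M a (Sum.inl j) ^ 2 * ind B (Sum.inl j))
        = ∑ j ∈ B, M a (Sum.inl j) ^ 2 := by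
      conv_rhs => rw [← sum_ind]
      apply Finset.sum_congr rfl
      intro j _
      by_cases h : j ∈ B <;> simp [ind, h]
    have h2 : (∑ j : Fin n, M a (Sum.inr j) ^ 2 * ind B (Sum.inr j))
        = ∑ j ∈ B, M a (Sum.inr j) ^ 2 := by
      conv_rhs => rw [← sum_ind]
      apply Finset.sum_congr rfl
      intro j _
      by_cases h : j ∈ B <;> simp [ind, h]
    rw [h1, h2, ← Finset.sum_add_distrib]
  calc ∑ a, ∑ b, (ind A a * M a b * ind B b)^2
      = ∑ a, ind A a * ∑ j ∈ B, (M a (Sum.inl j) ^ 2 + M a (Sum.inr j) ^ 2) := by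
        apply Finset.sum_congr rfl
        intro a _
        rw [← hinner a, Finset.mul_sum]
        exact Finset.sum_congr rfl fun b _ => hsq a b
    _ = ∑ i ∈ A, ∑ j ∈ B, ((M (Sum.inl i) (Sum.inl j)) ^ 2 + (M (Sum.inl i) (Sum.inr j)) ^ 2 +
        (M (Sum.inr i) (Sum.inl j)) ^ 2 + (M (Sum.inr i) (Sum.inr j)) ^ 2) := by
        rw [Fintype.sum_sum_type]
        have h1 : (∑ i : Fin n, ind A (Sum.inl i) * ∑ j ∈ B,
            (M (Sum.inl i) (Sum.inl j) ^ 2 + M (Sum.inl i) (Sum.inr j) ^ 2))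
            = ∑ i ∈ A, ∑ j ∈ B,
            (M (Sum.inl i) (Sum.inl j) ^ 2 + M (Sum.inl i) (Sum.inr j) ^ 2) := by
          conv_rhs => rw [← sum_ind]
          apply Finset.sum_congr rfl
          intro i _
          by_cases h : i ∈ A <;> simp [ind, h]
        have h2 : (∑ i : Fin n, ind A (Sum.inr i) * ∑ j ∈ B,
            (M (Sum.inr i) (Sum.inl j) ^ 2 + M (Sum.inr i) (Sum.inr j) ^ 2))
            = ∑ i ∈ A, ∑ j ∈ B,
            (M (Sum.inr i) (Sum.inl j) ^ 2 + M (Sum.inr i) (Sum.inr j) ^ 2) := by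
          conv_rhs => rw [← sum_ind]
          apply Finset.sum_congr rfl
          intro i _
          by_cases h : i ∈ A <;> simp [ind, h]
        rw [h1, h2, ← Finset.sum_add_distrib]
        apply Finset.sum_congr rfl
        intro i _
        rw [← Finset.sum_add_distrib]
        apply Finset.sum_congr rfl
        intro j _
        ring


open Module in
lemma dim_bound (M : Matrix (Fin n ⊕ Fin n) (Fin n ⊕ Fin n) ℝ) (A B : Finset (Fin n)) :
    2 * A.card + 2 * B.card ≤
      finrank ℝ
        ↥(LinearMap.ker (Matrix.mulVecLin
            ((1 : Matrix (Fin n ⊕ Fin n) (Fin n ⊕ Fin n) ℝ) - Matrix.diagonal (ind B))) ⊓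
          LinearMap.ker (Matrix.mulVecLin
            (((1 : Matrix (Fin n ⊕ Fin n) (Fin n ⊕ Fin n) ℝ) - Matrix.diagonal (ind A)) * M)))
        + (n + n) := by
  classical
  have hcardι : finrank ℝ ((Fin n ⊕ Fin n) → ℝ) = n + n := by
    rw [Module.finrank_pi, Fintype.card_sum, Fintype.card_fin]
  set X1 := (1 : Matrix (Fin n ⊕ Fin n) (Fin n ⊕ Fin n) ℝ) - Matrix.diagonal (ind B) with hX1
  set X2 := ((1 : Matrix (Fin n ⊕ Fin n) (Fin n ⊕ Fin n) ℝ) - Matrix.diagonal (ind A)) * M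
    with hX2
  have hRN1 : X1.rank + finrank ℝ (LinearMap.ker X1.mulVecLin) = n + n := by
    rw [← hcardι]
    exact LinearMap.finrank_range_add_finrank_ker X1.mulVecLin
  have hRN2 : X2.rank + finrank ℝ (LinearMap.ker X2.mulVecLin) = n + n := by
    rw [← hcardι]
    exact LinearMap.finrank_range_add_finrank_ker X2.mulVecLin
  have hr1 : X1.rank = (n - B.card) + (n - B.card) := rank_one_sub_diag B
  have hr2 : X2.rank ≤ (n - A.card) + (n - A.card) := by
    calc X2.rank ≤ ((1 : Matrix (Fin n ⊕ Fin n) (Fin n ⊕ Fin n) ℝ)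
          - Matrix.diagonal (ind A)).rank := Matrix.rank_mul_le_left _ M
      _ = (n - A.card) + (n - A.card) := rank_one_sub_diag A
  have hsup : finrank ℝ ↥(LinearMap.ker X1.mulVecLin ⊔ LinearMap.ker X2.mulVecLin) ≤ n + n := by
    rw [← hcardι]
    exact Submodule.finrank_le _
  have hform := Submodule.finrank_sup_add_finrank_inf_eq
    (LinearMap.ker X1.mulVecLin) (LinearMap.ker X2.mulVecLin)
  have hA : A.card ≤ n := by simpa using Finset.card_le_univ A
  have hB : B.card ≤ n := by simpa using Finset.card_le_univ B
  omega

open Module in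
lemma partA (M : Matrix (Fin n ⊕ Fin n) (Fin n ⊕ Fin n) ℝ) (hM : IsSymplectic M)
    (A B : Finset (Fin n)) :
    2 * ((A.card : ℝ) + B.card - n) ≤
      ∑ i ∈ A, ∑ j ∈ B, ((M (Sum.inl i) (Sum.inl j)) ^ 2 + (M (Sum.inl i) (Sum.inr j)) ^ 2 +
        (M (Sum.inr i) (Sum.inl j)) ^ 2 + (M (Sum.inr i) (Sum.inr j)) ^ 2) := by
  classical
  set DA := Matrix.diagonal (ind A) with hDA
  set DB := Matrix.diagonal (ind B) with hDB
  set J := Jm (Fin n) with hJm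
  set G := DA * M * DB with hG
  set V := LinearMap.ker (Matrix.mulVecLin
      ((1 : Matrix (Fin n ⊕ Fin n) (Fin n ⊕ Fin n) ℝ) - DB)) ⊓
    LinearMap.ker (Matrix.mulVecLin
      (((1 : Matrix (Fin n ⊕ Fin n) (Fin n ⊕ Fin n) ℝ) - DA) * M)) with hV
  have hmem : ∀ v : (Fin n ⊕ Fin n) → ℝ, v ∈ V →
      DB.mulVec v = v ∧ DA.mulVec (M.mulVec v) = M.mulVec v := by
    intro v hv
    rw [hV, Submodule.mem_inf] at hv
    obtain ⟨h1, h2⟩ := hv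
    rw [LinearMap.mem_ker, Matrix.mulVecLin_apply, Matrix.sub_mulVec,
      Matrix.one_mulVec, sub_eq_zero] at h1
    rw [LinearMap.mem_ker, Matrix.mulVecLin_apply, ← Matrix.mulVec_mulVec,
      Matrix.sub_mulVec, Matrix.one_mulVec, sub_eq_zero] at h2
    exact ⟨h1.symm, h2.symm⟩
  have hkey : ∀ v : (Fin n ⊕ Fin n) → ℝ, v ∈ V →
      2 * (v ⬝ᵥ v) ≤ (G.mulVec v) ⬝ᵥ (G.mulVec v) +
        (G.mulVec (J.mulVec v)) ⬝ᵥ (G.mulVec (J.mulVec v)) := by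
    intro v hv
    exact key_ineq M hM A B v (hmem v hv).1 (hmem v hv).2
  -- move to Euclidean space
  let ce : EuclideanSpace ℝ (Fin n ⊕ Fin n) ≃ₗ[ℝ] ((Fin n ⊕ Fin n) → ℝ) :=
    WithLp.linearEquiv 2 ℝ _
  have hinner : ∀ p q : EuclideanSpace ℝ (Fin n ⊕ Fin n),
      (inner ℝ p q : ℝ) = (ce p) ⬝ᵥ (ce q) := by
    intro p q
    simp [PiLp.inner_apply, dotProduct, ce, RCLike.inner_apply, conj_trivial,
      WithLp.linearEquiv_apply, mul_comm]
  set VE : Submodule ℝ (EuclideanSpace ℝ (Fin n ⊕ Fin n)) :=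
    V.map ce.symm.toLinearMap with hVE
  have hVErank : finrank ℝ VE = finrank ℝ V := LinearEquiv.finrank_map_eq ce.symm V
  set d := finrank ℝ VE with hd
  let ob : OrthonormalBasis (Fin d) ℝ VE := stdOrthonormalBasis ℝ VE
  let y : Fin d → EuclideanSpace ℝ (Fin n ⊕ Fin n) := fun b => (ob b : _)
  have hy : Orthonormal ℝ y := ob.orthonormal.comp_linearIsometry VE.subtypeₗᵢ
  let xv : Fin d → ((Fin n ⊕ Fin n) → ℝ) := fun b => ce (y b)
  have hxV : ∀ b, xv b ∈ V := by
    intro b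
    have hb : y b ∈ VE := (ob b).2
    rw [hVE, Submodule.mem_map] at hb
    obtain ⟨v, hv, hveq⟩ := hb
    have : ce (y b) = v := by rw [← hveq]; simp
    rw [show xv b = ce (y b) from rfl, this]
    exact hv
  -- Bessel's inequality, repackaged
  have hbessel : ∀ (yf : Fin d → EuclideanSpace ℝ (Fin n ⊕ Fin n)), Orthonormal ℝ yf →
      ∀ v : (Fin n ⊕ Fin n) → ℝ, ∑ b, (v ⬝ᵥ ce (yf b))^2 ≤ v ⬝ᵥ v := by
    intro yf hyf v
    have hB := hyf.sum_inner_products_le (ce.symm v) (s := Finset.univ)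
    have h2 : ‖ce.symm v‖^2 = v ⬝ᵥ v := by
      rw [← real_inner_self_eq_norm_sq, hinner]
      simp
    calc ∑ b, (v ⬝ᵥ ce (yf b))^2
        = ∑ b, ‖(inner ℝ (yf b) (ce.symm v) : ℝ)‖^2 := by
          apply Finset.sum_congr rfl
          intro b _
          rw [hinner, Real.norm_eq_abs, sq_abs, LinearEquiv.apply_symm_apply,
            dotProduct_comm]
      _ ≤ ‖ce.symm v‖^2 := hB
      _ = v ⬝ᵥ v := h2
  have hrowsum : ∀ (yf : Fin d → EuclideanSpace ℝ (Fin n ⊕ Fin n)), Orthonormal ℝ yf →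
      ∑ b, (G.mulVec (ce (yf b))) ⬝ᵥ (G.mulVec (ce (yf b))) ≤ ∑ a, ∑ b', (G a b')^2 := by
    intro yf hyf
    have hexp : ∀ b, (G.mulVec (ce (yf b))) ⬝ᵥ (G.mulVec (ce (yf b)))
        = ∑ a, ((fun b' => G a b') ⬝ᵥ ce (yf b))^2 := by
      intro b
      rw [dot_self_eq]
      apply Finset.sum_congr rfl
      intro a _
      rfl
    rw [Finset.sum_congr rfl (fun b _ => hexp b), Finset.sum_comm]
    apply Finset.sum_le_sum
    intro a _
    calc ∑ b, ((fun b' => G a b') ⬝ᵥ ce (yf b))^2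
        ≤ (fun b' => G a b') ⬝ᵥ (fun b' => G a b') := hbessel yf hyf _
      _ = ∑ b', (G a b')^2 := dot_self_eq _
  -- second orthonormal family
  let y2 : Fin d → EuclideanSpace ℝ (Fin n ⊕ Fin n) := fun b => ce.symm (J.mulVec (xv b))
  have hcey2 : ∀ b, ce (y2 b) = J.mulVec (xv b) := by
    intro b
    simp [y2]
  have hy2 : Orthonormal ℝ y2 := by
    rw [orthonormal_iff_ite]
    intro b b'
    have horig := (orthonormal_iff_ite.mp hy) b b'
    rw [hinner] at horig ⊢
    rw [hcey2 b, hcey2 b', mulVec_dot, Matrix.mulVec_mulVec, Jt_mul_J, Matrix.one_mulVec]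
    exact horig
  have hxx : ∀ b, xv b ⬝ᵥ xv b = 1 := by
    intro b
    have := (orthonormal_iff_ite.mp hy) b b
    rw [hinner] at this
    simpa using this
  -- assemble
  have hlow : 2 * (d : ℝ) ≤ (∑ b, (G.mulVec (ce (y b))) ⬝ᵥ (G.mulVec (ce (y b))))
      + ∑ b, (G.mulVec (ce (y2 b))) ⬝ᵥ (G.mulVec (ce (y2 b))) := by
    rw [← Finset.sum_add_distrib]
    have hstep : ∀ b : Fin d, 2 * (1:ℝ) ≤ (G.mulVec (ce (y b))) ⬝ᵥ (G.mulVec (ce (y b)))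
        + (G.mulVec (ce (y2 b))) ⬝ᵥ (G.mulVec (ce (y2 b))) := by
      intro b
      have h := hkey (xv b) (hxV b)
      rw [hxx b] at h
      rw [hcey2 b]
      exact h
    calc 2 * (d : ℝ) = ∑ _b : Fin d, 2 * (1:ℝ) := by
          simp [mul_comm]
      _ ≤ _ := Finset.sum_le_sum fun b _ => hstep b
  have hup : 2 * (d : ℝ) ≤ 2 * ∑ a, ∑ b', (G a b')^2 := by
    have h1 := hrowsum y hy
    have h2 := hrowsum y2 hy2
    linarith
  have hdle : (d : ℝ) ≤ ∑ a, ∑ b', (G a b')^2 := by linarith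
  -- combine with the dimension bound and the frobenius identity
  have hGentry : ∀ a b, G a b = ind A a * M a b * ind B b := by
    intro a b
    rw [hG, hDA, hDB, Matrix.mul_diagonal, Matrix.diagonal_mul]
  have hfrob : ∑ a, ∑ b', (G a b')^2
      = ∑ i ∈ A, ∑ j ∈ B, ((M (Sum.inl i) (Sum.inl j)) ^ 2 + (M (Sum.inl i) (Sum.inr j)) ^ 2 +
        (M (Sum.inr i) (Sum.inl j)) ^ 2 + (M (Sum.inr i) (Sum.inr j)) ^ 2) := by
    rw [← frob_eq M A B]
    exact Finset.sum_congr rfl fun a _ => Finset.sum_congr rfl fun b _ => by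
      rw [hGentry a b]
  have hdim := dim_bound M A B
  rw [← hV] at hdim
  have hdim' : 2 * (A.card : ℝ) + 2 * B.card ≤ (finrank ℝ V : ℝ) + (n + n) := by
    exact_mod_cast hdim
  have hdV : (d : ℝ) = (finrank ℝ V : ℝ) := by
    exact_mod_cast hVErank
  rw [← hfrob]
  linarith [hdle, hdim', hdV.ge, hdV.le]

end SymplAux


/-- The matrix `(1/2)(P∘P + Q∘Q + R∘R + S∘S)` associated with a symplectic matrix
`M = [[P,Q],[R,S]]` is doubly superstochastic. -/
theorem stmt2 {n : ℕ} (M : Matrix (Fin n ⊕ Fin n) (Fin n ⊕ Fin n) ℝ)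
    (hM : IsSymplectic M) :
    DoublySuperstochastic (Matrix.of fun i j : Fin n =>
      (1 / 2 : ℝ) * ((M (Sum.inl i) (Sum.inl j)) ^ 2 + (M (Sum.inl i) (Sum.inr j)) ^ 2 +
        (M (Sum.inr i) (Sum.inl j)) ^ 2 + (M (Sum.inr i) (Sum.inr j)) ^ 2)) := by
  classical
  set T : Fin n → Fin n → ℝ := fun i j =>
    (1 / 2 : ℝ) * ((M (Sum.inl i) (Sum.inl j)) ^ 2 + (M (Sum.inl i) (Sum.inr j)) ^ 2 +
      (M (Sum.inr i) (Sum.inl j)) ^ 2 + (M (Sum.inr i) (Sum.inr j)) ^ 2) with hTdef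
  have hT : ∀ i j, 0 ≤ T i j := by
    intro i j
    rw [hTdef]
    positivity
  have hall : ∀ A B : Finset (Fin n),
      (A.card : ℝ) + B.card - n ≤ ∑ i ∈ A, ∑ j ∈ B, T i j := by
    intro A B
    have h := SymplAux.partA M hM A B
    have heq : ∑ i ∈ A, ∑ j ∈ B, T i j
        = (1 / 2 : ℝ) * ∑ i ∈ A, ∑ j ∈ B,
          ((M (Sum.inl i) (Sum.inl j)) ^ 2 + (M (Sum.inl i) (Sum.inr j)) ^ 2 +
            (M (Sum.inr i) (Sum.inl j)) ^ 2 + (M (Sum.inr i) (Sum.inr j)) ^ 2) := by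
      rw [Finset.mul_sum]
      apply Finset.sum_congr rfl
      intro i _
      rw [Finset.mul_sum]
    rw [heq]
    linarith
  obtain ⟨E, hE0, hEr, hEc, hET⟩ := SuperAux.partB T hT hall
  refine ⟨Matrix.of E, ⟨hE0, hEr, hEc⟩, fun i j => ?_⟩
  exact hET i j
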